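/- Let G be a maximal outerplane graph on Fin n with red vertex set R of even cardinality. Suppose G contains two parallel red-blue diagonals {v_i, v_m} and {v_k, v_l}, with v_i, v_k blue and v_l, v_m red (possibly v_l = v_m), and a vertex v_j of degree two in G, such that v_i, v_j, v_k, v_l, v_m occur in this clockwise cyclic order. Then G is augmentable to meet R. -/

import Mathlib

/-- `x` lies strictly inside the open clockwise arc from `a` to `b` on the convex
`n`-gon whose vertices are `Fin n` in clockwise cyclic order. -/
def InArc (n : ℕ) (a b x : Fin n) : Prop :=
  0 < (x - a).val ∧ (x - a).val < (b - a).val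

/-- Two chords of the convex `n`-gon cross: their four endpoints are distinct and
interleave in the cyclic order, i.e. one endpoint of the second chord lies strictly
inside each of the two open arcs determined by the first chord. -/
def Cross (n : ℕ) (e f : Sym2 (Fin n)) : Prop :=
  ∃ a b c d : Fin n, e = s(a, b) ∧ f = s(c, d) ∧ InArc n a b c ∧ InArc n b a d

/-- A boundary edge of the convex `n`-gon: a chord of the form `{i, i+1 (mod n)}`. -/
def IsBoundaryEdge (n : ℕ) (e : Sym2 (Fin n)) : Prop :=
  ∃ i j : Fin n, e = s(i, j) ∧ (j - i).val = 1

/-- A diagonal of the convex `n`-gon: a chord (pair of distinct vertices) that is not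
a boundary edge. -/
def IsDiagonal (n : ℕ) (e : Sym2 (Fin n)) : Prop :=
  ¬ e.IsDiag ∧ ¬ IsBoundaryEdge n e

/-- A maximal outerplane graph (MOP) on `Fin n` (`n ≥ 3`): a simple graph whose edge
set consists of all `n` boundary edges together with `n - 3` pairwise non-crossing
diagonals. -/
def IsMOP (n : ℕ) (G : SimpleGraph (Fin n)) : Prop :=
  3 ≤ n ∧
  (∀ e, IsBoundaryEdge n e → e ∈ G.edgeSet) ∧
  (∀ e ∈ G.edgeSet, IsBoundaryEdge n e ∨ IsDiagonal n e) ∧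
  (∀ e ∈ G.edgeSet, ∀ f ∈ G.edgeSet, ¬ Cross n e f) ∧
  {e ∈ G.edgeSet | IsDiagonal n e}.ncard = n - 3

/-- `G` is (topologically) augmentable to meet the parity constraints with red set `R`:
there is a simple graph `H` on `Fin n`, edge-disjoint from `G`, whose edges are
pairwise non-crossing chords, in which every red vertex has odd degree and every blue
vertex has even degree. -/
def Augmentable (n : ℕ) (G : SimpleGraph (Fin n)) (R : Set (Fin n)) : Prop :=
  ∃ H : SimpleGraph (Fin n),
    (∀ e ∈ H.edgeSet, e ∉ G.edgeSet) ∧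
    (∀ e ∈ H.edgeSet, ∀ f ∈ H.edgeSet, ¬ Cross n e f) ∧
    (∀ v : Fin n, v ∈ R ↔ Odd ((H.neighborSet v).ncard))

/-- Condition (iii): `G` has two parallel red-blue diagonals `{v_i, v_m}` and
`{v_k, v_l}`, with `v_i, v_k` blue and `v_l, v_m` red (possibly `v_l = v_m`),
together with a vertex `v_j` of degree two in `G`, such that `v_i, v_j, v_k, v_l, v_m`
occur in this clockwise cyclic order. -/
def HasParallelRedBlueDiagonalsWithDegTwoVertex (n : ℕ) (G : SimpleGraph (Fin n))
    (R : Set (Fin n)) : Prop :=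
  ∃ i j k l m : Fin n,
    s(i, m) ∈ G.edgeSet ∧ IsDiagonal n s(i, m) ∧
    s(k, l) ∈ G.edgeSet ∧ IsDiagonal n s(k, l) ∧
    i ∉ R ∧ k ∉ R ∧ l ∈ R ∧ m ∈ R ∧
    (G.neighborSet j).ncard = 2 ∧
    0 < (j - i).val ∧ (j - i).val < (k - i).val ∧
    (k - i).val < (l - i).val ∧ (l - i).val ≤ (m - i).val

/-- Let `G` be a maximal outerplane graph on `Fin n` with red vertex set
`R` of even cardinality.  If `G` contains two parallel red-blue diagonals
`{v_i, v_m}` and `{v_k, v_l}` (with `v_i, v_k` blue and `v_l, v_m` red, possibly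
`v_l = v_m`) and a vertex `v_j` of degree two in `G`, such that `v_i, v_j, v_k, v_l,
v_m` occur in this clockwise cyclic order, then `G` is augmentable to meet `R`. -/
private lemma fin_subval {n : ℕ} (a b : Fin n) :
    (a.val ≤ b.val ∧ (b - a).val = b.val - a.val) ∨
    (b.val < a.val ∧ (b - a).val = b.val + n - a.val) := by
  have ha := a.isLt; have hb := b.isLt
  have h : (b - a).val = (n - a.val + b.val) % n := by rw [Fin.sub_def]
  rcases le_or_gt a.val b.val with hle | hlt
  · left; refine ⟨hle, ?_⟩
    have h2 : n - a.val + b.val = (b.val - a.val) + n := by omega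
    rw [h, h2, Nat.add_mod_right, Nat.mod_eq_of_lt (by omega)]
  · right; refine ⟨hlt, ?_⟩
    rw [h, Nat.mod_eq_of_lt (by omega)]; omega

private lemma dval {n : ℕ} [NeZero n] (i x y : Fin n) :
    ((x - i).val ≤ (y - i).val ∧ (y - x).val = (y - i).val - (x - i).val) ∨
    ((y - i).val < (x - i).val ∧ (y - x).val = (y - i).val + n - (x - i).val) := by
  have h := fin_subval (x - i) (y - i)
  rwa [sub_sub_sub_cancel_right] at h

private lemma inarc_iff {n : ℕ} [NeZero n] (i a b x : Fin n)
    (hab : (a - i).val < (b - i).val) :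
    InArc n a b x ↔ ((a - i).val < (x - i).val ∧ (x - i).val < (b - i).val) := by
  have hxI := (x - i).isLt
  have hbI := (b - i).isLt
  have haI := (a - i).isLt
  unfold InArc
  rcases dval i a x with ⟨h1, h2⟩ | ⟨h1, h2⟩ <;>
    rcases dval i a b with ⟨h3, h4⟩ | ⟨h3, h4⟩ <;>
      rw [h2, h4] <;> constructor <;> intro h <;> omega

private lemma inarc_rev_iff {n : ℕ} [NeZero n] (i a b x : Fin n)
    (hab : (a - i).val < (b - i).val) :
    InArc n b a x ↔ ((x - i).val < (a - i).val ∨ (b - i).val < (x - i).val) := by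
  have hxI := (x - i).isLt
  have hbI := (b - i).isLt
  have haI := (a - i).isLt
  unfold InArc
  rcases dval i b x with ⟨h1, h2⟩ | ⟨h1, h2⟩ <;>
    rcases dval i b a with ⟨h3, h4⟩ | ⟨h3, h4⟩ <;>
      rw [h2, h4] <;> constructor <;> intro h <;> omega

private lemma share_not_cross {n : ℕ} (c x y : Fin n) : ¬ Cross n s(c, x) s(c, y) := by
  haveI : NeZero n := ⟨by have := c.pos; omega⟩
  rintro ⟨p, q, r, s, he, hf, ⟨h1, h2⟩, ⟨h3, h4⟩⟩
  rcases Sym2.eq_iff.mp he with ⟨rfl, rfl⟩ | ⟨rfl, rfl⟩ <;>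
    rcases Sym2.eq_iff.mp hf with ⟨h5, h6⟩ | ⟨h5, h6⟩
  · rw [← h5, sub_self] at h1; simp at h1
  · rw [← h5] at h4; exact lt_irrefl _ h4
  · rw [← h5] at h2; exact lt_irrefl _ h2
  · rw [← h5, sub_self] at h3; simp at h3

private lemma not_cross_nest {n : ℕ} [NeZero n] (i a b c d : Fin n)
    (hab : (a - i).val < (b - i).val)
    (h1 : (a - i).val < (c - i).val) (h2 : (c - i).val < (b - i).val)
    (h3 : (a - i).val < (d - i).val) (h4 : (d - i).val < (b - i).val) :
    ¬ Cross n s(a, b) s(c, d) := by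
  rintro ⟨p, q, r, s, he, hf, hI1, hI2⟩
  rcases Sym2.eq_iff.mp he with ⟨rfl, rfl⟩ | ⟨rfl, rfl⟩
  · rw [inarc_iff i a b r hab] at hI1
    rw [inarc_rev_iff i a b s hab] at hI2
    rcases Sym2.eq_iff.mp hf with ⟨rfl, rfl⟩ | ⟨rfl, rfl⟩ <;> omega
  · rw [inarc_rev_iff i a b r hab] at hI1
    rw [inarc_iff i a b s hab] at hI2
    rcases Sym2.eq_iff.mp hf with ⟨rfl, rfl⟩ | ⟨rfl, rfl⟩ <;> omega

private lemma not_cross_out {n : ℕ} [NeZero n] (i a b c d : Fin n)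
    (hab : (a - i).val < (b - i).val)
    (h1 : (c - i).val < (a - i).val) (h2 : (b - i).val < (d - i).val) :
    ¬ Cross n s(a, b) s(c, d) := by
  rintro ⟨p, q, r, s, he, hf, hI1, hI2⟩
  rcases Sym2.eq_iff.mp he with ⟨rfl, rfl⟩ | ⟨rfl, rfl⟩
  · rw [inarc_iff i a b r hab] at hI1
    rw [inarc_rev_iff i a b s hab] at hI2
    rcases Sym2.eq_iff.mp hf with ⟨rfl, rfl⟩ | ⟨rfl, rfl⟩ <;> omega
  · rw [inarc_rev_iff i a b r hab] at hI1
    rw [inarc_iff i a b s hab] at hI2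
    rcases Sym2.eq_iff.mp hf with ⟨rfl, rfl⟩ | ⟨rfl, rfl⟩ <;> omega


theorem stmt_11 (n : ℕ) (G : SimpleGraph (Fin n)) (hG : IsMOP n G)
    (R : Set (Fin n)) (hR : Even R.ncard)
    (hpar : HasParallelRedBlueDiagonalsWithDegTwoVertex n G R) :
    Augmentable n G R := by
  classical
  obtain ⟨hn3, hBdry, _hClass, hNC, _hCount⟩ := hG
  obtain ⟨i, j, k, l, m, hGim, hDim, hGkl, hDkl, hiR, hkR, hlR, hmR, hdeg,
    hji, hjk, hkl, hlm⟩ := hpar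
  haveI : NeZero n := ⟨by omega⟩
  have hjI := (j - i).isLt
  have hkI := (k - i).isLt
  have hlI := (l - i).isLt
  have hmI := (m - i).isLt
  have hDii : (i - i).val = 0 := by rw [sub_self]; exact Fin.val_zero n
  -- diagonal s(k,l) is not a boundary edge : (l-k).val ≠ 1
  have hlk2 : (k - i).val + 2 ≤ (l - i).val := by
    rcases dval i k l with ⟨h1, h2⟩ | ⟨h1, h2⟩
    · by_contra hcon
      exact hDkl.2 ⟨k, l, rfl, by omega⟩
    · omega
  -- diagonal s(i,m) : m ≠ i - 1, i.e. (i-m).val ≠ 1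
  have hm2 : (m - i).val + 2 ≤ n := by
    rcases dval i m i with ⟨h1, h2⟩ | ⟨h1, h2⟩
    · rw [hDii] at h1; omega
    · by_contra hcon
      refine hDim.2 ⟨m, i, Sym2.eq_swap, ?_⟩
      rw [hDii] at h2; omega
  have hone : (1 : Fin n).val = 1 := by
    rw [Fin.val_one']; exact Nat.mod_eq_of_lt (by omega)
  set k1 : Fin n := k + 1 with hk1def
  set i1 : Fin n := i - 1 with hi1def
  have hDk1 : (k1 - i).val = (k - i).val + 1 := by
    have e : k1 - i = (k - i) + 1 := by rw [hk1def]; open Fin.CommRing in ring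
    rw [e, Fin.val_add, hone, Nat.mod_eq_of_lt (by omega)]
  have hDi1 : (i1 - i).val = n - 1 := by
    have e : i1 - i = 0 - 1 := by rw [hi1def]; open Fin.CommRing in ring
    have h0 : (0 : Fin n).val = 0 := Fin.val_zero n
    rcases fin_subval (1 : Fin n) (0 : Fin n) with ⟨ha, hb⟩ | ⟨ha, hb⟩
    · rw [h0, hone] at ha; omega
    · rw [e, hb, h0, hone]; omega
  have hDj1 : (j + 1 - i).val = (j - i).val + 1 := by
    have e : j + 1 - i = (j - i) + 1 := by open Fin.CommRing in ring
    rw [e, Fin.val_add, hone, Nat.mod_eq_of_lt (by omega)]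
  have hDjm1 : (j - 1 - i).val = (j - i).val - 1 := by
    have e : j - 1 - i = (j - i) - 1 := by open Fin.CommRing in ring
    rcases fin_subval (1 : Fin n) (j - i) with ⟨ha, hb⟩ | ⟨ha, hb⟩
    · rw [e, hb, hone]
    · rw [hone] at ha; omega
  have Dinj : ∀ x y : Fin n, (x - i).val = (y - i).val → x = y := by
    intro x y h
    exact sub_left_inj.mp (Fin.val_injective h)
  have valeq : ∀ x y : Fin n, x = y → (x - i).val = (y - i).val := by
    intro x y h; rw [h]
  -- neighbors of the degree-2 vertex j
  have hAdjJ : ∀ x : Fin n, G.Adj j x → x = j - 1 ∨ x = j + 1 := by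
    intro x hx
    by_contra hcon
    push_neg at hcon
    have h1 : G.Adj j (j + 1) := by
      rw [← SimpleGraph.mem_edgeSet]
      exact hBdry _ ⟨j, j + 1, rfl, by rw [show j + 1 - j = 1 by open Fin.CommRing in ring, hone]⟩
    have h2 : G.Adj j (j - 1) := by
      rw [← SimpleGraph.mem_edgeSet]
      exact hBdry _ ⟨j - 1, j, Sym2.eq_swap, by rw [show j - (j - 1) = 1 by open Fin.CommRing in ring, hone]⟩
    have hne : j - 1 ≠ j + 1 := by
      intro hEq
      have := valeq _ _ hEq
      rw [hDjm1, hDj1] at this; omega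
    have hxs : x ∉ ({j - 1, j + 1} : Set (Fin n)) := by
      simp only [Set.mem_insert_iff, Set.mem_singleton_iff]
      tauto
    have hsub : insert x ({j - 1, j + 1} : Set (Fin n)) ⊆ G.neighborSet j := by
      intro y hy
      simp only [Set.mem_insert_iff, Set.mem_singleton_iff] at hy
      rcases hy with rfl | rfl | rfl
      · exact hx
      · exact h2
      · exact h1
    have hc3 : (insert x ({j - 1, j + 1} : Set (Fin n))).ncard = 3 := by
      rw [Set.ncard_insert_of_notMem hxs, Set.ncard_pair hne]
    have hle := Set.ncard_le_ncard hsub (Set.toFinite _)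
    rw [hdeg, hc3] at hle
    omega
  -- the three vertex classes of red vertices
  set SS : Set (Fin n) :=
    {r : Fin n | r ∈ R ∧ (k - i).val < (r - i).val ∧ r ≠ k1 ∧ r ≠ i1} with hSSdef
  set A1 : Set (Fin n) :=
    {r : Fin n | r ∈ R ∧ (j - i).val < (r - i).val ∧ (r - i).val < (k - i).val} with hA1def
  set A2 : Set (Fin n) :=
    {r : Fin n | r ∈ R ∧ 0 < (r - i).val ∧ (r - i).val < (j - i).val} with hA2def
  set C1 : Prop := (A1.ncard + (if k1 ∈ R then 1 else 0)) % 2 = 1 with hC1def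
  set C2 : Prop := (A2.ncard + (if i1 ∈ R then 1 else 0)) % 2 = 1 with hC2def
  set E : Set (Sym2 (Fin n)) :=
    (⋃ x ∈ SS, {s(j, x)}) ∪ (⋃ x ∈ A1, {s(x, k1)}) ∪ (⋃ x ∈ A2, {s(x, i1)}) ∪
      ((if C1 then ({s(j, k1)} : Set (Sym2 (Fin n))) else ∅) ∪
       (if C2 then ({s(j, i1)} : Set (Sym2 (Fin n))) else ∅)) with hEdef
  have hSSfacts : ∀ x, x ∈ SS →
      x ∈ R ∧ ((k - i).val + 2 ≤ (x - i).val ∧ (x - i).val + 2 ≤ n) := by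
    intro x hx
    obtain ⟨hxR, hxD, hxk1, hxi1⟩ := hx
    have e1 : (x - i).val ≠ (k - i).val + 1 := by
      intro h; exact hxk1 (Dinj x k1 (by rw [hDk1]; exact h))
    have e2 : (x - i).val ≠ n - 1 := by
      intro h; exact hxi1 (Dinj x i1 (by rw [hDi1]; exact h))
    have := (x - i).isLt
    exact ⟨hxR, by omega, by omega⟩
  have Eform : ∀ e ∈ E,
      (∃ x : Fin n, e = s(j, x) ∧
        (x = i1 ∨ x = k1 ∨ ((k - i).val + 2 ≤ (x - i).val ∧ (x - i).val + 2 ≤ n))) ∨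
      (∃ r : Fin n, e = s(r, k1) ∧ (j - i).val < (r - i).val ∧ (r - i).val < (k - i).val) ∨
      (∃ r : Fin n, e = s(r, i1) ∧ 0 < (r - i).val ∧ (r - i).val < (j - i).val) := by
    intro e he
    rw [hEdef] at he
    rcases he with ((he | he) | he) | (he | he)
    · simp only [Set.mem_iUnion, Set.mem_singleton_iff, exists_prop] at he
      obtain ⟨x, hx, rfl⟩ := he
      exact Or.inl ⟨x, rfl, Or.inr (Or.inr (hSSfacts x hx).2)⟩
    · simp only [Set.mem_iUnion, Set.mem_singleton_iff, exists_prop] at he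
      obtain ⟨x, hx, rfl⟩ := he
      exact Or.inr (Or.inl ⟨x, rfl, hx.2⟩)
    · simp only [Set.mem_iUnion, Set.mem_singleton_iff, exists_prop] at he
      obtain ⟨x, hx, rfl⟩ := he
      exact Or.inr (Or.inr ⟨x, rfl, hx.2⟩)
    · split_ifs at he with h
      · exact Or.inl ⟨k1, Set.mem_singleton_iff.mp he, Or.inr (Or.inl rfl)⟩
      · exact absurd he (Set.notMem_empty _)
    · split_ifs at he with h
      · exact Or.inl ⟨i1, Set.mem_singleton_iff.mp he, Or.inl rfl⟩
      · exact absurd he (Set.notMem_empty _)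
  refine ⟨SimpleGraph.fromEdgeSet E, ?_, ?_, ?_⟩
  · -- H is edge-disjoint from G
    intro e he hg
    have heE : e ∈ E := by
      rw [SimpleGraph.edgeSet_fromEdgeSet] at he
      exact he.1
    rcases Eform e heE with ⟨x, rfl, hx⟩ | ⟨r, rfl, hr1, hr2⟩ | ⟨r, rfl, hr1, hr2⟩
    · have hadj : G.Adj j x := G.mem_edgeSet.mp hg
      have hD : (x - i).val = (j - i).val - 1 ∨ (x - i).val = (j - i).val + 1 := by
        rcases hAdjJ x hadj with rfl | rfl
        · left; exact hDjm1
        · right; exact hDj1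
      rcases hx with rfl | rfl | ⟨hx1, hx2⟩
      · rw [hDi1] at hD; omega
      · rw [hDk1] at hD; omega
      · omega
    · refine hNC _ hGkl _ hg ⟨k, l, k1, r, rfl, Sym2.eq_swap, ?_, ?_⟩
      · rw [inarc_iff i k l k1 hkl, hDk1]; omega
      · rw [inarc_rev_iff i k l r hkl]; omega
    · refine hNC _ hGim _ hg ⟨i, m, r, i1, rfl, rfl, ?_, ?_⟩
      · rw [inarc_iff i i m r (by rw [hDii]; omega), hDii]; omega
      · rw [inarc_rev_iff i i m i1 (by rw [hDii]; omega), hDii, hDi1]; omega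
  · -- pairwise non-crossing
    intro e he f hf
    have heE : e ∈ E := by rw [SimpleGraph.edgeSet_fromEdgeSet] at he; exact he.1
    have hfE : f ∈ E := by rw [SimpleGraph.edgeSet_fromEdgeSet] at hf; exact hf.1
    rcases Eform e heE with ⟨x, rfl, hx⟩ | ⟨r, rfl, hr1, hr2⟩ | ⟨r, rfl, hr1, hr2⟩ <;>
      rcases Eform f hfE with ⟨x', rfl, hx'⟩ | ⟨r', rfl, hr1', hr2'⟩ | ⟨r', rfl, hr1', hr2'⟩
    · exact share_not_cross j x x'
    · rcases hx with rfl | rfl | ⟨hx1, hx2⟩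
      · exact not_cross_nest i j i1 r' k1 (by rw [hDi1]; omega) (by omega)
          (by rw [hDi1]; omega) (by rw [hDk1]; omega) (by rw [hDk1, hDi1]; omega)
      · rw [show s(j, k1) = s(k1, j) from Sym2.eq_swap,
          show s(r', k1) = s(k1, r') from Sym2.eq_swap]
        exact share_not_cross k1 j r'
      · exact not_cross_nest i j x r' k1 (by omega) (by omega) (by omega)
          (by rw [hDk1]; omega) (by rw [hDk1]; omega)
    · rcases hx with rfl | rfl | ⟨hx1, hx2⟩
      · rw [show s(j, i1) = s(i1, j) from Sym2.eq_swap,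
          show s(r', i1) = s(i1, r') from Sym2.eq_swap]
        exact share_not_cross i1 j r'
      · exact not_cross_out i j k1 r' i1 (by rw [hDk1]; omega) (by omega)
          (by rw [hDk1, hDi1]; omega)
      · exact not_cross_out i j x r' i1 (by omega) (by omega) (by rw [hDi1]; omega)
    · rcases hx' with rfl | rfl | ⟨hx1, hx2⟩
      · exact not_cross_out i r k1 j i1 (by rw [hDk1]; omega) (by omega)
          (by rw [hDk1, hDi1]; omega)
      · rw [show s(r, k1) = s(k1, r) from Sym2.eq_swap,
          show s(j, k1) = s(k1, j) from Sym2.eq_swap]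
        exact share_not_cross k1 r j
      · exact not_cross_out i r k1 j x' (by rw [hDk1]; omega) (by omega)
          (by rw [hDk1]; omega)
    · rw [show s(r, k1) = s(k1, r) from Sym2.eq_swap,
        show s(r', k1) = s(k1, r') from Sym2.eq_swap]
      exact share_not_cross k1 r r'
    · exact not_cross_out i r k1 r' i1 (by rw [hDk1]; omega) (by omega)
        (by rw [hDk1, hDi1]; omega)
    · rcases hx' with rfl | rfl | ⟨hx1, hx2⟩
      · rw [show s(r, i1) = s(i1, r) from Sym2.eq_swap,
          show s(j, i1) = s(i1, j) from Sym2.eq_swap]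
        exact share_not_cross i1 r j
      · exact not_cross_nest i r i1 j k1 (by rw [hDi1]; omega) (by omega)
          (by rw [hDi1]; omega) (by rw [hDk1]; omega) (by rw [hDk1, hDi1]; omega)
      · exact not_cross_nest i r i1 j x' (by rw [hDi1]; omega) (by omega)
          (by rw [hDi1]; omega) (by omega) (by rw [hDi1]; omega)
    · exact not_cross_nest i r i1 r' k1 (by rw [hDi1]; omega) (by omega)
        (by rw [hDi1]; omega) (by rw [hDk1]; omega) (by rw [hDk1, hDi1]; omega)
    · rw [show s(r, i1) = s(i1, r) from Sym2.eq_swap,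
        show s(r', i1) = s(i1, r') from Sym2.eq_swap]
      exact share_not_cross i1 r r'
  ·   -- parity
    have hDne : ∀ x y : Fin n, (x - i).val ≠ (y - i).val → x ≠ y :=
      fun x y h hxy => h (valeq _ _ hxy)
    have hnb : ∀ v w : Fin n,
        w ∈ (SimpleGraph.fromEdgeSet E).neighborSet v ↔ (s(v, w) ∈ E ∧ v ≠ w) := by
      intro v w
      rw [SimpleGraph.mem_neighborSet, SimpleGraph.fromEdgeSet_adj]
    have memE : ∀ v w : Fin n, s(v, w) ∈ E ↔
        (((v = j ∧ w ∈ SS) ∨ (w = j ∧ v ∈ SS)) ∨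
         ((v ∈ A1 ∧ w = k1) ∨ (w ∈ A1 ∧ v = k1)) ∨
         ((v ∈ A2 ∧ w = i1) ∨ (w ∈ A2 ∧ v = i1)) ∨
         (C1 ∧ ((v = j ∧ w = k1) ∨ (w = j ∧ v = k1))) ∨
         (C2 ∧ ((v = j ∧ w = i1) ∨ (w = j ∧ v = i1)))) := by
      intro v w
      rw [hEdef]
      simp only [Set.mem_union, Set.mem_iUnion, Set.mem_singleton_iff, exists_prop]
      constructor
      · rintro (((⟨x, hx, hvw⟩ | ⟨x, hx, hvw⟩) | ⟨x, hx, hvw⟩) | (hc | hc))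
        · rcases Sym2.eq_iff.mp hvw with ⟨rfl, rfl⟩ | ⟨rfl, rfl⟩
          · exact Or.inl (Or.inl ⟨rfl, hx⟩)
          · exact Or.inl (Or.inr ⟨rfl, hx⟩)
        · rcases Sym2.eq_iff.mp hvw with ⟨rfl, rfl⟩ | ⟨rfl, rfl⟩
          · exact Or.inr (Or.inl (Or.inl ⟨hx, rfl⟩))
          · exact Or.inr (Or.inl (Or.inr ⟨hx, rfl⟩))
        · rcases Sym2.eq_iff.mp hvw with ⟨rfl, rfl⟩ | ⟨rfl, rfl⟩
          · exact Or.inr (Or.inr (Or.inl (Or.inl ⟨hx, rfl⟩)))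
          · exact Or.inr (Or.inr (Or.inl (Or.inr ⟨hx, rfl⟩)))
        · split_ifs at hc with h
          · rw [Set.mem_singleton_iff] at hc
            rcases Sym2.eq_iff.mp hc with ⟨rfl, rfl⟩ | ⟨rfl, rfl⟩
            · exact Or.inr (Or.inr (Or.inr (Or.inl ⟨h, Or.inl ⟨rfl, rfl⟩⟩)))
            · exact Or.inr (Or.inr (Or.inr (Or.inl ⟨h, Or.inr ⟨rfl, rfl⟩⟩)))
          · exact absurd hc (Set.notMem_empty _)
        · split_ifs at hc with h
          · rw [Set.mem_singleton_iff] at hc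
            rcases Sym2.eq_iff.mp hc with ⟨rfl, rfl⟩ | ⟨rfl, rfl⟩
            · exact Or.inr (Or.inr (Or.inr (Or.inr ⟨h, Or.inl ⟨rfl, rfl⟩⟩)))
            · exact Or.inr (Or.inr (Or.inr (Or.inr ⟨h, Or.inr ⟨rfl, rfl⟩⟩)))
          · exact absurd hc (Set.notMem_empty _)
      · rintro ((⟨rfl, hw⟩ | ⟨rfl, hv⟩) | (⟨hv, rfl⟩ | ⟨hw, rfl⟩) | (⟨hv, rfl⟩ | ⟨hw, rfl⟩) |
          ⟨h, (⟨rfl, rfl⟩ | ⟨rfl, rfl⟩)⟩ | ⟨h, (⟨rfl, rfl⟩ | ⟨rfl, rfl⟩)⟩)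
        · exact Or.inl (Or.inl (Or.inl ⟨w, hw, rfl⟩))
        · exact Or.inl (Or.inl (Or.inl ⟨v, hv, Sym2.eq_swap⟩))
        · exact Or.inl (Or.inl (Or.inr ⟨v, hv, rfl⟩))
        · exact Or.inl (Or.inl (Or.inr ⟨w, hw, Sym2.eq_swap⟩))
        · exact Or.inl (Or.inr ⟨v, hv, rfl⟩)
        · exact Or.inl (Or.inr ⟨w, hw, Sym2.eq_swap⟩)
        · exact Or.inr (Or.inl (by rw [if_pos h]; exact rfl))
        · exact Or.inr (Or.inl (by rw [if_pos h]; exact Set.mem_singleton_iff.mpr Sym2.eq_swap))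
        · exact Or.inr (Or.inr (by rw [if_pos h]; exact rfl))
        · exact Or.inr (Or.inr (by rw [if_pos h]; exact Set.mem_singleton_iff.mpr Sym2.eq_swap))
    -- basic exclusions
    have hjk1 : j ≠ k1 := hDne j k1 (by rw [hDk1]; omega)
    have hji1 : j ≠ i1 := hDne j i1 (by rw [hDi1]; omega)
    have hk1i1 : k1 ≠ i1 := hDne k1 i1 (by rw [hDk1, hDi1]; omega)
    have hjSS : j ∉ SS := fun h => by have hx := h.2.1; omega
    have hjA1 : j ∉ A1 := fun h => by have hx := h.2.1; omega
    have hjA2 : j ∉ A2 := fun h => by have hx := h.2.2; omega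
    have hk1SS : k1 ∉ SS := fun h => h.2.2.1 rfl
    have hk1A1 : k1 ∉ A1 := fun h => by have hx := h.2.2; rw [hDk1] at hx; omega
    have hk1A2 : k1 ∉ A2 := fun h => by have hx := h.2.2; rw [hDk1] at hx; omega
    have hi1SS : i1 ∉ SS := fun h => h.2.2.2 rfl
    have hi1A1 : i1 ∉ A1 := fun h => by have hx := h.2.2; rw [hDi1] at hx; omega
    have hi1A2 : i1 ∉ A2 := fun h => by have hx := h.2.2; rw [hDi1] at hx; omega
    -- neighborhoods
    have hblue : ∀ v : Fin n, v ∉ R → v ≠ j → v ≠ k1 → v ≠ i1 →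
        (SimpleGraph.fromEdgeSet E).neighborSet v = ∅ := by
      intro v hvR hvj hvk1 hvi1
      ext w
      simp only [Set.mem_empty_iff_false, iff_false]
      intro hw
      obtain ⟨hmem, -⟩ := (hnb v w).mp hw
      rw [memE v w] at hmem
      rcases hmem with (⟨h1, h2⟩ | ⟨h1, h2⟩) | (⟨h1, h2⟩ | ⟨h1, h2⟩) | (⟨h1, h2⟩ | ⟨h1, h2⟩) |
        ⟨h, ⟨h1, h2⟩ | ⟨h1, h2⟩⟩ | ⟨h, ⟨h1, h2⟩ | ⟨h1, h2⟩⟩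
      · exact hvj h1
      · exact hvR h2.1
      · exact hvR h1.1
      · exact hvk1 h2
      · exact hvR h1.1
      · exact hvi1 h2
      · exact hvj h1
      · exact hvk1 h2
      · exact hvj h1
      · exact hvi1 h2
    have hredSS : ∀ v : Fin n, v ∈ SS →
        (SimpleGraph.fromEdgeSet E).neighborSet v = {j} := by
      intro v hv
      obtain ⟨hvR, hvD, hvk1, hvi1⟩ := id hv
      ext w
      rw [hnb v w, memE v w, Set.mem_singleton_iff]
      constructor
      · rintro ⟨hmem, hne⟩
        rcases hmem with (⟨h1, h2⟩ | ⟨h1, h2⟩) | (⟨h1, h2⟩ | ⟨h1, h2⟩) | (⟨h1, h2⟩ | ⟨h1, h2⟩) |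
          ⟨h, ⟨h1, h2⟩ | ⟨h1, h2⟩⟩ | ⟨h, ⟨h1, h2⟩ | ⟨h1, h2⟩⟩
        · exact absurd (valeq _ _ h1) (by omega)
        · exact h1
        · exact absurd h1.2.2 (by omega)
        · exact absurd h2 hvk1
        · exact absurd h1.2.2 (by omega)
        · exact absurd h2 hvi1
        · exact absurd (valeq _ _ h1) (by omega)
        · exact absurd h2 hvk1
        · exact absurd (valeq _ _ h1) (by omega)
        · exact absurd h2 hvi1
      · intro hw
        rw [hw]
        exact ⟨Or.inl (Or.inr ⟨rfl, hv⟩), hDne v j (by omega)⟩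
    have hredA1 : ∀ v : Fin n, v ∈ A1 →
        (SimpleGraph.fromEdgeSet E).neighborSet v = {k1} := by
      intro v hv
      obtain ⟨hvR, hv1, hv2⟩ := id hv
      ext w
      rw [hnb v w, memE v w, Set.mem_singleton_iff]
      constructor
      · rintro ⟨hmem, hne⟩
        rcases hmem with (⟨h1, h2⟩ | ⟨h1, h2⟩) | (⟨h1, h2⟩ | ⟨h1, h2⟩) | (⟨h1, h2⟩ | ⟨h1, h2⟩) |
          ⟨h, ⟨h1, h2⟩ | ⟨h1, h2⟩⟩ | ⟨h, ⟨h1, h2⟩ | ⟨h1, h2⟩⟩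
        · exact absurd (valeq _ _ h1) (by omega)
        · exact absurd h2.2.1 (by omega)
        · exact h2
        · exact absurd (valeq _ _ h2) (by rw [hDk1]; omega)
        · exact absurd h1.2.2 (by omega)
        · exact absurd (valeq _ _ h2) (by rw [hDi1]; omega)
        · exact absurd (valeq _ _ h1) (by omega)
        · exact absurd (valeq _ _ h2) (by rw [hDk1]; omega)
        · exact absurd (valeq _ _ h1) (by omega)
        · exact absurd (valeq _ _ h2) (by rw [hDi1]; omega)
      · intro hw
        rw [hw]
        exact ⟨Or.inr (Or.inl (Or.inl ⟨hv, rfl⟩)), hDne v k1 (by rw [hDk1]; omega)⟩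
    have hredA2 : ∀ v : Fin n, v ∈ A2 →
        (SimpleGraph.fromEdgeSet E).neighborSet v = {i1} := by
      intro v hv
      obtain ⟨hvR, hv1, hv2⟩ := id hv
      ext w
      rw [hnb v w, memE v w, Set.mem_singleton_iff]
      constructor
      · rintro ⟨hmem, hne⟩
        rcases hmem with (⟨h1, h2⟩ | ⟨h1, h2⟩) | (⟨h1, h2⟩ | ⟨h1, h2⟩) | (⟨h1, h2⟩ | ⟨h1, h2⟩) |
          ⟨h, ⟨h1, h2⟩ | ⟨h1, h2⟩⟩ | ⟨h, ⟨h1, h2⟩ | ⟨h1, h2⟩⟩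
        · exact absurd (valeq _ _ h1) (by omega)
        · exact absurd h2.2.1 (by omega)
        · exact absurd h1.2.1 (by omega)
        · exact absurd (valeq _ _ h2) (by rw [hDk1]; omega)
        · exact h2
        · exact absurd (valeq _ _ h2) (by rw [hDi1]; omega)
        · exact absurd (valeq _ _ h1) (by omega)
        · exact absurd (valeq _ _ h2) (by rw [hDk1]; omega)
        · exact absurd (valeq _ _ h1) (by omega)
        · exact absurd (valeq _ _ h2) (by rw [hDi1]; omega)
      · intro hw
        rw [hw]
        exact ⟨Or.inr (Or.inr (Or.inl (Or.inl ⟨hv, rfl⟩))), hDne v i1 (by rw [hDi1]; omega)⟩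
    have hnbJ : (SimpleGraph.fromEdgeSet E).neighborSet j =
        SS ∪ ((if C1 then ({k1} : Set (Fin n)) else ∅) ∪
              (if C2 then ({i1} : Set (Fin n)) else ∅)) := by
      ext w
      rw [hnb j w, memE j w]
      constructor
      · rintro ⟨hmem, hne⟩
        rcases hmem with (⟨h1, h2⟩ | ⟨h1, h2⟩) | (⟨h1, h2⟩ | ⟨h1, h2⟩) | (⟨h1, h2⟩ | ⟨h1, h2⟩) |
          ⟨h, ⟨h1, h2⟩ | ⟨h1, h2⟩⟩ | ⟨h, ⟨h1, h2⟩ | ⟨h1, h2⟩⟩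
        · exact Set.mem_union_left _ h2
        · exact absurd h2 hjSS
        · exact absurd h1 hjA1
        · exact absurd h2 hjk1
        · exact absurd h1 hjA2
        · exact absurd h2 hji1
        · exact Set.mem_union_right _ (Set.mem_union_left _
            (by rw [if_pos h]; exact Set.mem_singleton_iff.mpr h2))
        · exact absurd h2 hjk1
        · exact Set.mem_union_right _ (Set.mem_union_right _
            (by rw [if_pos h]; exact Set.mem_singleton_iff.mpr h2))
        · exact absurd h2 hji1
      · intro hww
        rcases (Set.mem_union _ _ _).mp hww with hw | hw'
        rotate_left
        rcases (Set.mem_union _ _ _).mp hw' with hw | hw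
        rotate_left
        rotate_left
        · refine ⟨Or.inl (Or.inl ⟨rfl, hw⟩), hDne j w ?_⟩
          have hx := (hSSfacts w hw).2.1
          omega
        · split_ifs at hw with h
          · rw [Set.mem_singleton_iff] at hw
            subst hw
            exact ⟨Or.inr (Or.inr (Or.inr (Or.inl ⟨h, Or.inl ⟨rfl, rfl⟩⟩))), hjk1⟩
          · exact absurd hw (Set.notMem_empty _)
        · split_ifs at hw with h
          · rw [Set.mem_singleton_iff] at hw
            subst hw
            exact ⟨Or.inr (Or.inr (Or.inr (Or.inr ⟨h, Or.inl ⟨rfl, rfl⟩⟩))), hji1⟩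
          · exact absurd hw (Set.notMem_empty _)
    have hnbK1 : (SimpleGraph.fromEdgeSet E).neighborSet k1 =
        A1 ∪ (if C1 then ({j} : Set (Fin n)) else ∅) := by
      ext w
      rw [hnb k1 w, memE k1 w]
      constructor
      · rintro ⟨hmem, hne⟩
        rcases hmem with (⟨h1, h2⟩ | ⟨h1, h2⟩) | (⟨h1, h2⟩ | ⟨h1, h2⟩) | (⟨h1, h2⟩ | ⟨h1, h2⟩) |
          ⟨h, ⟨h1, h2⟩ | ⟨h1, h2⟩⟩ | ⟨h, ⟨h1, h2⟩ | ⟨h1, h2⟩⟩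
        · exact absurd h1.symm hjk1
        · exact absurd h2 hk1SS
        · exact absurd h1 hk1A1
        · exact Set.mem_union_left _ h1
        · exact absurd h1 hk1A2
        · exact absurd h2 hk1i1
        · exact absurd h1.symm hjk1
        · exact Set.mem_union_right _
            (by rw [if_pos h]; exact Set.mem_singleton_iff.mpr h1)
        · exact absurd h1.symm hjk1
        · exact absurd h2 hk1i1
      · intro hww
        rcases (Set.mem_union _ _ _).mp hww with hw | hw
        · refine ⟨Or.inr (Or.inl (Or.inr ⟨hw, rfl⟩)), hDne k1 w ?_⟩
          have hx := hw.2.2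
          rw [hDk1]
          omega
        · split_ifs at hw with h
          · rw [Set.mem_singleton_iff] at hw
            subst hw
            exact ⟨Or.inr (Or.inr (Or.inr (Or.inl ⟨h, Or.inr ⟨rfl, rfl⟩⟩))), fun hx => hjk1 hx.symm⟩
          · exact absurd hw (Set.notMem_empty _)
    have hnbI1 : (SimpleGraph.fromEdgeSet E).neighborSet i1 =
        A2 ∪ (if C2 then ({j} : Set (Fin n)) else ∅) := by
      ext w
      rw [hnb i1 w, memE i1 w]
      constructor
      · rintro ⟨hmem, hne⟩
        rcases hmem with (⟨h1, h2⟩ | ⟨h1, h2⟩) | (⟨h1, h2⟩ | ⟨h1, h2⟩) | (⟨h1, h2⟩ | ⟨h1, h2⟩) |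
          ⟨h, ⟨h1, h2⟩ | ⟨h1, h2⟩⟩ | ⟨h, ⟨h1, h2⟩ | ⟨h1, h2⟩⟩
        · exact absurd h1.symm hji1
        · exact absurd h2 hi1SS
        · exact absurd h1 hi1A1
        · exact absurd h2.symm hk1i1
        · exact absurd h1 hi1A2
        · exact Set.mem_union_left _ h1
        · exact absurd h1.symm hji1
        · exact absurd h2.symm hk1i1
        · exact absurd h1.symm hji1
        · exact Set.mem_union_right _
            (by rw [if_pos h]; exact Set.mem_singleton_iff.mpr h1)
      · intro hww
        rcases (Set.mem_union _ _ _).mp hww with hw | hw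
        · refine ⟨Or.inr (Or.inr (Or.inl (Or.inr ⟨hw, rfl⟩))), hDne i1 w ?_⟩
          have hx := hw.2.2
          rw [hDi1]
          omega
        · split_ifs at hw with h
          · rw [Set.mem_singleton_iff] at hw
            subst hw
            exact ⟨Or.inr (Or.inr (Or.inr (Or.inr ⟨h, Or.inr ⟨rfl, rfl⟩⟩))), fun hx => hji1 hx.symm⟩
          · exact absurd hw (Set.notMem_empty _)
    -- the counting identity
    have hRsing : ∀ a : Fin n, (R ∩ {a}).ncard = (if a ∈ R then 1 else 0) := by
      intro a
      by_cases h : a ∈ R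
      · have heq : R ∩ {a} = {a} := by
          ext x
          simp only [Set.mem_inter_iff, Set.mem_singleton_iff]
          exact ⟨fun hx => hx.2, fun hx => ⟨by rw [hx]; exact h, hx⟩⟩
        rw [if_pos h, heq, Set.ncard_singleton]
      · have heq : R ∩ {a} = ∅ := by
          ext x
          simp only [Set.mem_inter_iff, Set.mem_singleton_iff, Set.mem_empty_iff_false,
            iff_false, not_and]
          intro hx hxa
          exact h (hxa ▸ hx)
        rw [if_neg h, heq, Set.ncard_empty]
    have hpart : R = A2 ∪ (A1 ∪ (SS ∪ ((R ∩ {j}) ∪ ((R ∩ {k1}) ∪ (R ∩ {i1}))))) := by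
      ext r
      constructor
      · intro hr
        have hrI := (r - i).isLt
        by_cases h0 : (r - i).val = 0
        · have hri : r = i := Dinj r i (by rw [hDii]; exact h0)
          rw [hri] at hr
          exact absurd hr hiR
        by_cases hj0 : (r - i).val = (j - i).val
        · exact Or.inr (Or.inr (Or.inr (Or.inl ⟨hr, Set.mem_singleton_iff.mpr (Dinj r j hj0)⟩)))
        by_cases hrk1 : r = k1
        · exact Or.inr (Or.inr (Or.inr (Or.inr (Or.inl ⟨hr, Set.mem_singleton_iff.mpr hrk1⟩))))
        by_cases hri1 : r = i1
        · exact Or.inr (Or.inr (Or.inr (Or.inr (Or.inr ⟨hr, Set.mem_singleton_iff.mpr hri1⟩))))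
        by_cases hk0 : (r - i).val = (k - i).val
        · have hrk : r = k := Dinj r k hk0
          rw [hrk] at hr
          exact absurd hr hkR
        by_cases hlt : (r - i).val < (j - i).val
        · exact Or.inl ⟨hr, by omega, hlt⟩
        by_cases hlt2 : (r - i).val < (k - i).val
        · exact Or.inr (Or.inl ⟨hr, by omega, hlt2⟩)
        · exact Or.inr (Or.inr (Or.inl ⟨hr, by omega, hrk1, hri1⟩))
      · rintro (h | h | h | h | h | h) <;> exact h.1
    have hdis5 : Disjoint (R ∩ {k1}) (R ∩ {i1}) := by
      rw [Set.disjoint_left]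
      rintro a ⟨-, ha⟩ ⟨-, hb⟩
      rw [Set.mem_singleton_iff] at ha hb
      exact hk1i1 (ha ▸ hb)
    have hdis4 : Disjoint (R ∩ {j}) ((R ∩ {k1}) ∪ (R ∩ {i1})) := by
      rw [Set.disjoint_left]
      rintro a ⟨-, ha⟩ (⟨-, hb⟩ | ⟨-, hb⟩) <;> rw [Set.mem_singleton_iff] at ha hb
      · exact hjk1 (ha ▸ hb)
      · exact hji1 (ha ▸ hb)
    have hdis3 : Disjoint SS ((R ∩ {j}) ∪ ((R ∩ {k1}) ∪ (R ∩ {i1}))) := by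
      rw [Set.disjoint_left]
      rintro a ha (⟨-, hb⟩ | ⟨-, hb⟩ | ⟨-, hb⟩) <;> rw [Set.mem_singleton_iff] at hb <;>
        rw [hb] at ha
      · exact hjSS ha
      · exact hk1SS ha
      · exact hi1SS ha
    have hdis2 : Disjoint A1 (SS ∪ ((R ∩ {j}) ∪ ((R ∩ {k1}) ∪ (R ∩ {i1})))) := by
      rw [Set.disjoint_left]
      rintro a ha (hb | ⟨-, hb⟩ | ⟨-, hb⟩ | ⟨-, hb⟩)
      · have h1 := ha.2.2
        have h2 := hb.2.1
        omega
      all_goals rw [Set.mem_singleton_iff] at hb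
      all_goals rw [hb] at ha
      · exact hjA1 ha
      · exact hk1A1 ha
      · exact hi1A1 ha
    have hdis1 : Disjoint A2 (A1 ∪ (SS ∪ ((R ∩ {j}) ∪ ((R ∩ {k1}) ∪ (R ∩ {i1}))))) := by
      rw [Set.disjoint_left]
      rintro a ha (hb | hb | ⟨-, hb⟩ | ⟨-, hb⟩ | ⟨-, hb⟩)
      · have h1 := ha.2.2
        have h2 := hb.2.1
        omega
      · have h1 := ha.2.2
        have h2 := hb.2.1
        omega
      all_goals rw [Set.mem_singleton_iff] at hb
      all_goals rw [hb] at ha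
      · exact hjA2 ha
      · exact hk1A2 ha
      · exact hi1A2 ha
    have hcard : R.ncard = A2.ncard + (A1.ncard + (SS.ncard +
        ((if j ∈ R then 1 else 0) +
         ((if k1 ∈ R then 1 else 0) + (if i1 ∈ R then 1 else 0))))) := by
      have hc := congrArg Set.ncard hpart
      rw [Set.ncard_union_eq hdis1, Set.ncard_union_eq hdis2, Set.ncard_union_eq hdis3,
        Set.ncard_union_eq hdis4, Set.ncard_union_eq hdis5, hRsing j, hRsing k1, hRsing i1] at hc
      exact hc
    have hC1eq : (if C1 then 1 else 0) =
        (A1.ncard + (if k1 ∈ R then 1 else 0)) % 2 := by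
      by_cases h : C1
      · rw [if_pos h]
        rw [hC1def] at h
        omega
      · rw [if_neg h]
        rw [hC1def] at h
        omega
    have hC2eq : (if C2 then 1 else 0) =
        (A2.ncard + (if i1 ∈ R then 1 else 0)) % 2 := by
      by_cases h : C2
      · rw [if_pos h]
        rw [hC2def] at h
        omega
      · rw [if_neg h]
        rw [hC2def] at h
        omega
    have hncJ : ((SimpleGraph.fromEdgeSet E).neighborSet j).ncard =
        SS.ncard + ((if C1 then 1 else 0) + (if C2 then 1 else 0)) := by
      rw [hnbJ]
      have hk1in : k1 ∉ insert i1 SS := by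
        simp only [Set.mem_insert_iff]
        rintro (h | h)
        · exact hk1i1 h
        · exact hk1SS h
      by_cases h1 : C1 <;> by_cases h2 : C2
      · rw [if_pos h1, if_pos h2, Set.singleton_union, Set.union_insert, Set.union_singleton,
          Set.ncard_insert_of_notMem hk1in, Set.ncard_insert_of_notMem hi1SS]
        omega
      · rw [if_pos h1, if_neg h2, Set.union_empty, Set.union_singleton,
          Set.ncard_insert_of_notMem hk1SS]
        omega
      · rw [if_neg h1, if_pos h2, Set.empty_union, Set.union_singleton,
          Set.ncard_insert_of_notMem hi1SS]
        omega
      · rw [if_neg h1, if_neg h2, Set.union_empty, Set.union_empty]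
        omega
    have hncK1 : ((SimpleGraph.fromEdgeSet E).neighborSet k1).ncard =
        A1.ncard + (if C1 then 1 else 0) := by
      rw [hnbK1]
      by_cases h1 : C1
      · rw [if_pos h1, Set.union_singleton, Set.ncard_insert_of_notMem hjA1, if_pos h1]
      · rw [if_neg h1, Set.union_empty, if_neg h1]
        omega
    have hncI1 : ((SimpleGraph.fromEdgeSet E).neighborSet i1).ncard =
        A2.ncard + (if C2 then 1 else 0) := by
      rw [hnbI1]
      by_cases h2 : C2
      · rw [if_pos h2, Set.union_singleton, Set.ncard_insert_of_notMem hjA2, if_pos h2]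
      · rw [if_neg h2, Set.union_empty, if_neg h2]
        omega
    intro v
    by_cases hvj : v = j
    · subst hvj
      rw [hncJ]
      rw [Nat.even_iff, hcard] at hR
      constructor
      · intro hjR
        rw [Nat.odd_iff, hC1eq, hC2eq]
        rw [if_pos hjR] at hR
        by_cases hk1R : k1 ∈ R <;> by_cases hi1R : i1 ∈ R <;>
          simp only [hk1R, hi1R, if_true, if_false] at hR ⊢ <;> omega
      · intro hodd
        by_contra hjR
        rw [Nat.odd_iff, hC1eq, hC2eq] at hodd
        rw [if_neg hjR] at hR
        by_cases hk1R : k1 ∈ R <;> by_cases hi1R : i1 ∈ R <;>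
          simp only [hk1R, hi1R, if_true, if_false] at hR hodd <;> omega
    by_cases hvk1 : v = k1
    · subst hvk1
      rw [hncK1]
      constructor
      · intro hk1R
        rw [Nat.odd_iff, hC1eq]
        simp only [hk1R, if_true]
        omega
      · intro hodd
        by_contra hk1R
        rw [Nat.odd_iff, hC1eq] at hodd
        simp only [hk1R, if_false] at hodd
        omega
    by_cases hvi1 : v = i1
    · subst hvi1
      rw [hncI1]
      constructor
      · intro hi1R
        rw [Nat.odd_iff, hC2eq]
        simp only [hi1R, if_true]
        omega
      · intro hodd
        by_contra hi1R
        rw [Nat.odd_iff, hC2eq] at hodd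
        simp only [hi1R, if_false] at hodd
        omega
    by_cases hvR : v ∈ R
    · have hvi : v ≠ i := fun h => hiR (h ▸ hvR)
      have hv0 : (v - i).val ≠ 0 := fun h => hvi (Dinj v i (by rw [hDii]; exact h))
      have hvk : v ≠ k := fun h => hkR (h ▸ hvR)
      have hvkD : (v - i).val ≠ (k - i).val := fun h => hvk (Dinj v k h)
      have hvjD : (v - i).val ≠ (j - i).val := fun h => hvj (Dinj v j h)
      by_cases hlt : (v - i).val < (j - i).val
      · rw [hredA2 v ⟨hvR, by omega, hlt⟩, Set.ncard_singleton]
        exact iff_of_true hvR ⟨0, rfl⟩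
      · by_cases hlt2 : (v - i).val < (k - i).val
        · rw [hredA1 v ⟨hvR, by omega, hlt2⟩, Set.ncard_singleton]
          exact iff_of_true hvR ⟨0, rfl⟩
        · rw [hredSS v ⟨hvR, by omega, hvk1, hvi1⟩, Set.ncard_singleton]
          exact iff_of_true hvR ⟨0, rfl⟩
    · rw [hblue v hvR hvj hvk1 hvi1, Set.ncard_empty]
      exact iff_of_false hvR (by simp)
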